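/- There exists a constant c > 1 such that for every d ≥ 2 the following holds: if R is a finite subset of the unit sphere { x ∈ EuclideanSpace ℝ (Fin d) : ‖x‖ = 1 } with the property that for every x with ‖x‖ = 1 there exists r ∈ R with ‖x − r‖ < 1, then |R| ≥ c^(d−1). -/

import Mathlib

open Metric MeasureTheory Set

/-- There is a constant `c > 1` such that, for every dimension `d ≥ 2`, any finite subset `R`
of the unit sphere of `EuclideanSpace ℝ (Fin d)` such that every point of the unit sphere is
within distance strictly less than `1` of some point of `R` satisfies `|R| ≥ c ^ (d - 1)`. -/
theorem sphere_cap_cover_lower_bound :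
    ∃ c : ℝ, 1 < c ∧ ∀ d : ℕ, 2 ≤ d →
      ∀ R : Finset (EuclideanSpace ℝ (Fin d)),
        (∀ r ∈ R, ‖r‖ = 1) →
        (∀ x : EuclideanSpace ℝ (Fin d), ‖x‖ = 1 → ∃ r ∈ R, ‖x - r‖ < 1) →
        c ^ (d - 1) ≤ (R.card : ℝ) := by
  have h3 : (0:ℝ) < Real.sqrt 3 := Real.sqrt_pos.mpr (by norm_num)
  have hs3 : Real.sqrt 3 < 2 := by
    nlinarith [Real.sq_sqrt (by norm_num : (3:ℝ) ≥ 0), Real.sqrt_nonneg 3]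
  refine ⟨2 / Real.sqrt 3, (one_lt_div h3).mpr hs3, ?_⟩
  intro d hd R hR hcov
  set a : ℝ := Real.sqrt 3 / 2 with ha
  have ha0 : 0 < a := by positivity
  have ha1 : a < 1 := by rw [ha]; linarith
  -- covering of the closed unit ball
  have hcover : closedBall (0 : EuclideanSpace ℝ (Fin d)) 1 ⊆
      ⋃ r ∈ R, closedBall ((1/2 : ℝ) • r) a := by
    intro y hy
    simp only [mem_closedBall, dist_zero_right] at hy
    -- pick a direction
    by_cases hy0 : y = 0
    · -- use any r from covering a unit vector
      obtain ⟨i, hi⟩ : ∃ i : Fin d, True := ⟨⟨0, by omega⟩, trivial⟩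
      have hx1 : ‖EuclideanSpace.single i (1:ℝ)‖ = 1 := by
        rw [EuclideanSpace.norm_single]; norm_num
      obtain ⟨r, hrR, -⟩ := hcov _ hx1
      refine mem_iUnion₂.mpr ⟨r, hrR, ?_⟩
      have hr1 : ‖r‖ = 1 := hR r hrR
      simp only [mem_closedBall, hy0, dist_eq_norm, zero_sub, norm_neg, norm_smul]
      rw [hr1]
      simp only [Real.norm_eq_abs]
      rw [abs_of_nonneg (by norm_num : (0:ℝ) ≤ 1/2)]
      nlinarith [Real.sq_sqrt (by norm_num : (3:ℝ) ≥ 0)]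
    · set l : ℝ := ‖y‖ with hl
      have hl0 : 0 < l := norm_pos_iff.mpr hy0
      set x : EuclideanSpace ℝ (Fin d) := l⁻¹ • y with hx
      have hx1 : ‖x‖ = 1 := by
        rw [hx, norm_smul, Real.norm_eq_abs, abs_of_pos (inv_pos.mpr hl0)]
        field_simp
        exact hl.symm
      obtain ⟨r, hrR, hxr⟩ := hcov x hx1
      have hr1 : ‖r‖ = 1 := hR r hrR
      refine mem_iUnion₂.mpr ⟨r, hrR, ?_⟩
      -- inner product bound
      have hinner : (1/2 : ℝ) < inner ℝ x r := by
        have := norm_sub_sq_real x r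
        rw [hx1, hr1] at this
        nlinarith [norm_nonneg (x - r), hxr]
      have hyx : y = l • x := by
        rw [hx, smul_smul, mul_inv_cancel₀ hl0.ne', one_smul]
      have key : ‖y - (1/2 : ℝ) • r‖^2 ≤ 3/4 := by
        have expand : ‖y - (1/2 : ℝ) • r‖^2
            = ‖y‖^2 - 2 * inner ℝ y ((1/2:ℝ) • r) + ‖(1/2:ℝ) • r‖^2 :=
          norm_sub_sq_real y ((1/2:ℝ) • r)
        have h1 : inner ℝ y ((1/2:ℝ) • r) = (l * (1/2)) * (inner ℝ x r : ℝ) := by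
          rw [hyx, real_inner_smul_left, real_inner_smul_right]; ring
        have h2 : ‖(1/2:ℝ) • r‖^2 = 1/4 := by
          rw [norm_smul, hr1, Real.norm_eq_abs]; norm_num
        rw [expand, h1, h2, ← hl]
        have hl1 : l ≤ 1 := hy
        nlinarith
      have : ‖y - (1/2 : ℝ) • r‖ ≤ a := by
        rw [ha]
        nlinarith [Real.sq_sqrt (by norm_num : (3:ℝ) ≥ 0), norm_nonneg (y - (1/2:ℝ) • r)]
      simpa [mem_closedBall, dist_eq_norm] using this
  -- measure comparison
  set μ : Measure (EuclideanSpace ℝ (Fin d)) := volume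
  have hfr : Module.finrank ℝ (EuclideanSpace ℝ (Fin d)) = d := finrank_euclideanSpace_fin
  have hball : ∀ c : EuclideanSpace ℝ (Fin d),
      μ (closedBall c a) = ENNReal.ofReal (a ^ d) * μ (ball 0 1) := by
    intro c
    rw [Measure.addHaar_closedBall μ c ha0.le, hfr]
  have hB1 : μ (closedBall (0 : EuclideanSpace ℝ (Fin d)) 1)
      = ENNReal.ofReal ((1:ℝ) ^ d) * μ (ball 0 1) := by
    rw [Measure.addHaar_closedBall μ 0 zero_le_one, hfr]
  have hle : μ (closedBall (0 : EuclideanSpace ℝ (Fin d)) 1)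
      ≤ R.card * (ENNReal.ofReal (a ^ d) * μ (ball 0 1)) := by
    calc μ (closedBall (0 : EuclideanSpace ℝ (Fin d)) 1)
        ≤ μ (⋃ r ∈ R, closedBall ((1/2 : ℝ) • r) a) := measure_mono hcover
      _ ≤ ∑ r ∈ R, μ (closedBall ((1/2 : ℝ) • r) a) := measure_biUnion_finset_le R _
      _ = ∑ r ∈ R, ENNReal.ofReal (a ^ d) * μ (ball 0 1) := by
          exact Finset.sum_congr rfl fun r _ => hball _
      _ = R.card * (ENNReal.ofReal (a ^ d) * μ (ball 0 1)) := by
          rw [Finset.sum_const, nsmul_eq_mul]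
  have hμ0 : μ (ball (0 : EuclideanSpace ℝ (Fin d)) 1) ≠ 0 :=
    (measure_ball_pos μ 0 one_pos).ne'
  have hμt : μ (ball (0 : EuclideanSpace ℝ (Fin d)) 1) ≠ ⊤ :=
    measure_ball_lt_top.ne
  rw [hB1] at hle
  have hcancel : ENNReal.ofReal ((1:ℝ)^d) ≤ R.card * ENNReal.ofReal (a ^ d) := by
    rw [← mul_assoc] at hle
    exact (ENNReal.mul_le_mul_iff_left hμ0 hμt).mp hle
  have hreal : (1:ℝ) ≤ R.card * a ^ d := by
    have : ENNReal.ofReal ((1:ℝ)^d) ≤ ENNReal.ofReal (R.card * a ^ d) := by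
      rw [ENNReal.ofReal_mul (by positivity)] at *
      simpa using hcancel
    have := (ENNReal.ofReal_le_ofReal_iff (by positivity)).mp this
    simpa using this
  -- conclude
  have hcd : (2 / Real.sqrt 3) ^ d ≤ (R.card : ℝ) := by
    have h2d : (0:ℝ) < 2 ^ d := by positivity
    rw [ha, div_pow] at hreal
    rw [div_pow, div_le_iff₀ (by positivity)]
    calc (2:ℝ)^d = 1 * 2^d := (one_mul _).symm
      _ ≤ ((R.card : ℝ) * (Real.sqrt 3 ^ d / 2 ^ d)) * 2 ^ d :=
          mul_le_mul_of_nonneg_right hreal h2d.le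
      _ = (R.card : ℝ) * Real.sqrt 3 ^ d := by field_simp
  calc (2 / Real.sqrt 3) ^ (d - 1) ≤ (2 / Real.sqrt 3) ^ d := by
        apply pow_le_pow_right₀ (by rw [le_div_iff₀ h3]; linarith)
        omega
    _ ≤ (R.card : ℝ) := hcd
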